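/- Let X be a nonnegative random variable, α ∈ (0,1), and let Y be a random variable whose Laplace transform satisfies E[e^{-uY}] = E[e^{-(Γ(1-α)/α) u^α X}] for all u ≥ 0. Then for every β with 0 ≤ β < α, E[Y^β] = (Γ(1-β/α) Γ(1-α)^{β/α}) / (Γ(1-β) α^{β/α}) · E[X^{β/α}], whenever E[X^{β/α}] < ∞. -/

import Mathlib

open MeasureTheory Real Set Filter

lemma one_sub_exp_neg_bounds (t : ℝ) (ht : 0 ≤ t) :
    0 ≤ 1 - Real.exp (-t) ∧ 1 - Real.exp (-t) ≤ t ∧ 1 - Real.exp (-t) ≤ 1 := by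
  have h1 : Real.exp (-t) ≤ 1 := Real.exp_le_one_iff.mpr (by linarith)
  have h2 := Real.add_one_le_exp (-t)
  have h3 : 0 < Real.exp (-t) := Real.exp_pos _
  exact ⟨by linarith, by linarith, by linarith⟩

lemma lemA_meas (s : ℝ) : Measurable (fun t : ℝ => (1 - Real.exp (-t)) * t ^ (-s - 1)) := by
  have h1 : Measurable (fun t : ℝ => 1 - Real.exp (-t)) :=
    measurable_const.sub (Real.measurable_exp.comp measurable_neg)
  have h2 : Measurable (fun t : ℝ => t ^ (-s - 1)) := by measurability
  exact h1.mul h2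

lemma lemA_int (s : ℝ) (hs0 : 0 < s) (hs1 : s < 1) :
    IntegrableOn (fun t : ℝ => (1 - Real.exp (-t)) * t ^ (-s - 1)) (Ioi 0) := by
  have hmeas := lemA_meas s
  rw [← Ioc_union_Ioi_eq_Ioi (le_of_lt one_pos), integrableOn_union]
  constructor
  · -- on Ioc 0 1, dominated by t ^ (-s)
    have hdom : IntegrableOn (fun t : ℝ => t ^ (-s)) (Ioc (0:ℝ) 1) := by
      have h := intervalIntegral.intervalIntegrable_rpow' (a := (0:ℝ)) (b := 1) (r := -s)
        (by linarith)
      rwa [intervalIntegrable_iff_integrableOn_Ioc_of_le (le_of_lt one_pos)] at h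
    refine hdom.mono' hmeas.aestronglyMeasurable ?_
    filter_upwards [ae_restrict_mem measurableSet_Ioc] with t ht
    obtain ⟨h0, h1, _⟩ := one_sub_exp_neg_bounds t ht.1.le
    have htp : (0:ℝ) < t := ht.1
    rw [Real.norm_eq_abs, abs_mul, abs_of_nonneg h0,
      abs_of_nonneg (Real.rpow_nonneg htp.le _)]
    calc (1 - Real.exp (-t)) * t ^ (-s - 1) ≤ t * t ^ (-s - 1) := by
          apply mul_le_mul_of_nonneg_right h1 (Real.rpow_nonneg htp.le _)
      _ = t ^ (-s) := by
          rw [← Real.rpow_one_add' htp.le (by linarith)]; ring_nf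
  · -- on Ioi 1, dominated by t ^ (-s - 1)
    have hdom : IntegrableOn (fun t : ℝ => t ^ (-s - 1)) (Ioi (1:ℝ)) :=
      integrableOn_Ioi_rpow_of_lt (by linarith) one_pos
    refine hdom.mono' hmeas.aestronglyMeasurable ?_
    filter_upwards [ae_restrict_mem measurableSet_Ioi] with t ht
    have htp : (0:ℝ) < t := lt_trans one_pos ht
    obtain ⟨h0, _, h1⟩ := one_sub_exp_neg_bounds t htp.le
    rw [Real.norm_eq_abs, abs_mul, abs_of_nonneg h0,
      abs_of_nonneg (Real.rpow_nonneg htp.le _)]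
    nlinarith [Real.rpow_nonneg htp.le (-s-1)]

lemma lemA_val (s : ℝ) (hs0 : 0 < s) (hs1 : s < 1) :
    ∫ t in Ioi (0:ℝ), (1 - Real.exp (-t)) * t ^ (-s - 1) = Real.Gamma (1 - s) / s := by
  have hGi : IntegrableOn (fun t : ℝ => Real.exp (-t) * t ^ (-s)) (Ioi 0) := by
    have := Real.GammaIntegral_convergent (s := 1 - s) (by linarith)
    simpa using this
  have hG : ∫ t in Ioi (0:ℝ), Real.exp (-t) * t ^ (-s) = Real.Gamma (1 - s) := by
    rw [Real.Gamma_eq_integral (by linarith : (0:ℝ) < 1 - s)]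
    norm_num
  have hu : ∀ x ∈ Ioi (0:ℝ), HasDerivAt (fun t => 1 - Real.exp (-t)) (Real.exp (-x)) x := by
    intro x _
    have h1 : HasDerivAt (fun t : ℝ => Real.exp (-t)) (Real.exp (-x) * (-1)) x :=
      (Real.hasDerivAt_exp (-x)).comp x ((hasDerivAt_id x).neg)
    simpa using h1.const_sub 1
  have hv : ∀ x ∈ Ioi (0:ℝ), HasDerivAt (fun t : ℝ => -(t ^ (-s)) / s) (x ^ (-s - 1)) x := by
    intro x hx
    have h1 : HasDerivAt (fun t : ℝ => t ^ (-s)) (-s * x ^ (-s - 1)) x :=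
      Real.hasDerivAt_rpow_const (Or.inl (ne_of_gt hx))
    have h2 := (h1.neg).div_const s
    convert h2 using 1
    all_goals first | rfl | field_simp
  have huv' : IntegrableOn ((fun t => 1 - Real.exp (-t)) * fun t : ℝ => t ^ (-s - 1)) (Ioi 0) :=
    lemA_int s hs0 hs1
  have hu'v : IntegrableOn ((fun t => Real.exp (-t)) * fun t : ℝ => -(t ^ (-s)) / s) (Ioi 0) := by
    have h2 : ((fun t => Real.exp (-t)) * fun t : ℝ => -(t ^ (-s)) / s)
        = fun t : ℝ => (-(Real.exp (-t) * t ^ (-s))) / s := by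
      funext t; simp [Pi.mul_apply]; ring
    rw [h2]
    exact (hGi.neg).div_const s
  have h_zero : Tendsto ((fun t => 1 - Real.exp (-t)) * fun t : ℝ => -(t ^ (-s)) / s)
      (nhdsWithin 0 (Ioi 0)) (nhds 0) := by
    apply squeeze_zero_norm' (a := fun t : ℝ => t ^ (1 - s) / s)
    · filter_upwards [self_mem_nhdsWithin] with t (ht : (0:ℝ) < t)
      obtain ⟨h0, h1, _⟩ := one_sub_exp_neg_bounds t ht.le
      rw [Pi.mul_apply, Real.norm_eq_abs, abs_mul, abs_of_nonneg h0, abs_div,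
        abs_neg, abs_of_nonneg (Real.rpow_nonneg ht.le _), abs_of_pos hs0]
      have hmain : (1 - Real.exp (-t)) * t ^ (-s) ≤ t ^ (1 - s) := by
        calc (1 - Real.exp (-t)) * t ^ (-s) ≤ t * t ^ (-s) := by
              apply mul_le_mul_of_nonneg_right h1 (Real.rpow_nonneg ht.le _)
          _ = t ^ (1 - s) := by rw [← Real.rpow_one_add' ht.le (by linarith)]; ring_nf
      rw [← mul_div_assoc]
      gcongr
    · have : Tendsto (fun t : ℝ => t ^ (1 - s)) (nhdsWithin 0 (Ioi 0)) (nhds 0) := by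
        have hc : ContinuousAt (fun t : ℝ => t ^ (1 - s)) 0 :=
          Real.continuousAt_rpow_const 0 (1 - s) (Or.inr (by linarith))
        have := hc.tendsto
        rw [Real.zero_rpow (by linarith : 1 - s ≠ 0)] at this
        exact this.mono_left nhdsWithin_le_nhds
      simpa using this.div_const s
  have h_infty : Tendsto ((fun t => 1 - Real.exp (-t)) * fun t : ℝ => -(t ^ (-s)) / s)
      atTop (nhds 0) := by
    apply squeeze_zero_norm' (a := fun t : ℝ => t ^ (-s) / s)
    · filter_upwards [eventually_gt_atTop (0:ℝ)] with t ht
      obtain ⟨h0, _, h1⟩ := one_sub_exp_neg_bounds t ht.le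
      rw [Pi.mul_apply, Real.norm_eq_abs, abs_mul, abs_of_nonneg h0, abs_div,
        abs_neg, abs_of_nonneg (Real.rpow_nonneg ht.le _), abs_of_pos hs0]
      have hq : 0 ≤ t ^ (-s) / s := div_nonneg (Real.rpow_nonneg ht.le _) hs0.le
      nlinarith
    · have : Tendsto (fun t : ℝ => t ^ (-s)) atTop (nhds 0) :=
        tendsto_rpow_neg_atTop hs0
      simpa using this.div_const s
  have key := integral_Ioi_mul_deriv_eq_deriv_mul hu hv huv' hu'v h_zero h_infty
  rw [key]
  have h3 : ∫ x in Ioi (0:ℝ), Real.exp (-x) * (-x ^ (-s) / s)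
      = -((∫ t in Ioi (0:ℝ), Real.exp (-t) * t ^ (-s)) / s) := by
    calc ∫ x in Ioi (0:ℝ), Real.exp (-x) * (-x ^ (-s) / s)
        = ∫ x in Ioi (0:ℝ), -(Real.exp (-x) * x ^ (-s)) / s := by
          apply setIntegral_congr_fun measurableSet_Ioi; intro x _; ring
      _ = (∫ x in Ioi (0:ℝ), -(Real.exp (-x) * x ^ (-s))) / s := integral_div _ _
      _ = -((∫ t in Ioi (0:ℝ), Real.exp (-t) * t ^ (-s)) / s) := by rw [integral_neg]; ring
  rw [h3, hG]
  ring


lemma lemB_pt (s y : ℝ) (hy : 0 < y) (u : ℝ) (hu : 0 < u) :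
    (1 - Real.exp (-(u * y))) * u ^ (-s - 1)
      = y ^ (s + 1) * ((1 - Real.exp (-(y * u))) * (y * u) ^ (-s - 1)) := by
  rw [Real.mul_rpow hy.le hu.le, mul_comm u y]
  rw [show y ^ (s+1) * ((1 - Real.exp (-(y*u))) * (y ^ (-s-1) * u ^ (-s-1)))
      = (y ^ (s+1) * y ^ (-s-1)) * ((1 - Real.exp (-(y*u))) * u ^ (-s-1)) from by ring,
    ← Real.rpow_add hy]
  norm_num

lemma lemB_int (s y : ℝ) (hs0 : 0 < s) (hs1 : s < 1) (hy : 0 ≤ y) :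
    IntegrableOn (fun u : ℝ => (1 - Real.exp (-(u * y))) * u ^ (-s - 1)) (Ioi 0) := by
  rcases eq_or_lt_of_le hy with rfl | hy
  · apply (integrableOn_zero (s := Ioi (0:ℝ))).congr_fun _ measurableSet_Ioi
    intro u _
    simp
  · have base := lemA_int s hs0 hs1
    have comp : IntegrableOn (fun u : ℝ =>
        (1 - Real.exp (-(y * u))) * (y * u) ^ (-s - 1)) (Ioi 0) := by
      have h := (integrableOn_Ioi_comp_mul_left_iff
        (fun t : ℝ => (1 - Real.exp (-t)) * t ^ (-s - 1)) 0 hy).mpr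
      rw [mul_zero] at h
      exact h base
    have h2 : IntegrableOn (fun u : ℝ =>
        y ^ (s + 1) * ((1 - Real.exp (-(y * u))) * (y * u) ^ (-s - 1))) (Ioi 0) :=
      comp.const_mul _
    apply h2.congr_fun _ measurableSet_Ioi
    intro u hu
    exact (lemB_pt s y hy u hu).symm

lemma lemB_val (s y : ℝ) (hs0 : 0 < s) (hs1 : s < 1) (hy : 0 ≤ y) :
    ∫ u in Ioi (0:ℝ), (1 - Real.exp (-(u * y))) * u ^ (-s - 1)
      = y ^ s * (Real.Gamma (1 - s) / s) := by
  rcases eq_or_lt_of_le hy with rfl | hy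
  · rw [Real.zero_rpow (ne_of_gt hs0), zero_mul]
    calc ∫ u in Ioi (0:ℝ), (1 - Real.exp (-(u * 0))) * u ^ (-s - 1)
        = ∫ _ in Ioi (0:ℝ), (0:ℝ) :=
          setIntegral_congr_fun measurableSet_Ioi (fun u _ => by simp)
      _ = 0 := by simp
  · have subst := integral_comp_mul_left_Ioi
      (fun t : ℝ => (1 - Real.exp (-t)) * t ^ (-s - 1)) 0 hy
    rw [mul_zero, lemA_val s hs0 hs1, smul_eq_mul] at subst
    have congr1 : ∫ u in Ioi (0:ℝ), (1 - Real.exp (-(u * y))) * u ^ (-s - 1)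
        = ∫ u in Ioi (0:ℝ),
            y ^ (s + 1) * ((1 - Real.exp (-(y * u))) * (y * u) ^ (-s - 1)) :=
      setIntegral_congr_fun measurableSet_Ioi (fun u hu => lemB_pt s y hy u hu)
    rw [congr1, integral_const_mul, subst]
    rw [← mul_assoc, ← Real.rpow_neg_one y, ← Real.rpow_add hy,
      show s + 1 + -1 = s from by ring]

lemma lemC_pt (a b c x : ℝ) (ha0 : 0 < a) (hx : 0 ≤ x) (u : ℝ) (hu : 0 < u) :
    (|a| * u ^ (a - 1)) • ((fun t : ℝ => (1 - Real.exp (-(t * (c * x)))) * t ^ (-(b / a) - 1))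
        (u ^ a))
      = a * ((1 - Real.exp (-(c * u ^ a * x))) * u ^ (-b - 1)) := by
  have h1 : (u ^ a) ^ (-(b / a) - 1) = u ^ (-b - a) := by
    rw [← Real.rpow_mul hu.le]
    congr 1
    field_simp
  have h2 : u ^ a * (c * x) = c * u ^ a * x := by ring
  rw [smul_eq_mul, abs_of_pos ha0]
  dsimp only
  rw [h1, h2]
  rw [show a * u ^ (a-1) * ((1 - Real.exp (-(c * u ^ a * x))) * u ^ (-b-a))
      = a * ((1 - Real.exp (-(c * u ^ a * x))) * (u ^ (a-1) * u ^ (-b-a))) from by ring,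
    ← Real.rpow_add hu, show a - 1 + (-b - a) = -b - 1 from by ring]

lemma lemC_int (a b c x : ℝ) (ha0 : 0 < a) (ha1 : a < 1) (hb0 : 0 < b) (hba : b < a)
    (hc : 0 < c) (hx : 0 ≤ x) :
    IntegrableOn (fun u : ℝ => (1 - Real.exp (-(c * u ^ a * x))) * u ^ (-b - 1)) (Ioi 0) := by
  have hs0 : 0 < b / a := div_pos hb0 ha0
  have hs1 : b / a < 1 := (div_lt_one ha0).mpr hba
  have hcx : 0 ≤ c * x := mul_nonneg hc.le hx
  have hgi := lemB_int (b / a) (c * x) hs0 hs1 hcx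
  have hcomp := (integrableOn_Ioi_comp_rpow_iff
    (fun t : ℝ => (1 - Real.exp (-(t * (c * x)))) * t ^ (-(b / a) - 1)) ha0.ne').mpr hgi
  have h2 := hcomp.const_mul (a⁻¹)
  apply h2.congr
  apply (ae_restrict_iff' measurableSet_Ioi).mpr
  filter_upwards with u hu
  rw [lemC_pt a b c x ha0 hx u hu, ← mul_assoc, inv_mul_cancel₀ ha0.ne', one_mul]

lemma lemC_val (a b c x : ℝ) (ha0 : 0 < a) (ha1 : a < 1) (hb0 : 0 < b) (hba : b < a)
    (hc : 0 < c) (hx : 0 ≤ x) :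
    ∫ u in Ioi (0:ℝ), (1 - Real.exp (-(c * u ^ a * x))) * u ^ (-b - 1)
      = (c * x) ^ (b / a) * (Real.Gamma (1 - b / a) / b) := by
  have hs0 : 0 < b / a := div_pos hb0 ha0
  have hs1 : b / a < 1 := (div_lt_one ha0).mpr hba
  have hcx : 0 ≤ c * x := mul_nonneg hc.le hx
  have hgv := lemB_val (b / a) (c * x) hs0 hs1 hcx
  have subst := integral_comp_rpow_Ioi
    (fun t : ℝ => (1 - Real.exp (-(t * (c * x)))) * t ^ (-(b / a) - 1)) ha0.ne'
  rw [hgv] at subst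
  have congr1 : ∫ u in Ioi (0:ℝ),
      (|a| * u ^ (a - 1)) • ((fun t : ℝ =>
        (1 - Real.exp (-(t * (c * x)))) * t ^ (-(b / a) - 1)) (u ^ a))
      = ∫ u in Ioi (0:ℝ), a * ((1 - Real.exp (-(c * u ^ a * x))) * u ^ (-b - 1)) :=
    setIntegral_congr_fun measurableSet_Ioi (fun u hu => lemC_pt a b c x ha0 hx u hu)
  rw [congr1, integral_const_mul] at subst
  have key : a * (∫ u in Ioi (0:ℝ), (1 - Real.exp (-(c * u ^ a * x))) * u ^ (-b - 1))
      = a * ((c * x) ^ (b / a) * (Real.Gamma (1 - b / a) / b)) := by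
    rw [subst]
    field_simp
  exact mul_left_cancel₀ ha0.ne' key

theorem stmt2 {Ω : Type*} [MeasurableSpace Ω] (P : Measure Ω) [IsProbabilityMeasure P]
    (X Y : Ω → ℝ) (hXm : Measurable X) (hYm : Measurable Y) (hX : ∀ ω, 0 ≤ X ω)
    (α β : ℝ) (hα : α ∈ Set.Ioo (0:ℝ) 1) (hβ : 0 ≤ β) (hβα : β < α)
    (hLap : ∀ u : ℝ, 0 ≤ u →
      ∫ ω, Real.exp (-(u * Y ω)) ∂P
        = ∫ ω, Real.exp (-(Real.Gamma (1 - α) / α * u ^ α * X ω)) ∂P)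
    (hInt : Integrable (fun ω => X ω ^ (β / α)) P) :
    ∫ ω, Y ω ^ β ∂P
      = (Real.Gamma (1 - β / α) * Real.Gamma (1 - α) ^ (β / α))
          / (Real.Gamma (1 - β) * α ^ (β / α)) * ∫ ω, X ω ^ (β / α) ∂P := by
  obtain ⟨hα0, hα1⟩ := hα
  rcases eq_or_lt_of_le hβ with rfl | hβ0
  · simp [Real.rpow_zero, Real.Gamma_one, zero_div]
  set c : ℝ := Real.Gamma (1 - α) / α with hc_def
  have hΓα : 0 < Real.Gamma (1 - α) := Real.Gamma_pos_of_pos (by linarith)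
  have hc : 0 < c := div_pos hΓα hα0
  have hβ1 : β < 1 := lt_trans hβα hα1
  have hΓβ : 0 < Real.Gamma (1 - β) := Real.Gamma_pos_of_pos (by linarith)
  have hsα0 : 0 < β / α := div_pos hβ0 hα0
  have hsα1 : β / α < 1 := (div_lt_one hα0).mpr hβα
  -- measurability / integrability of exp(-(c u^α X))
  have hXe_meas : ∀ u : ℝ, Measurable (fun ω => Real.exp (-(c * u ^ α * X ω))) := by
    intro u
    exact Real.measurable_exp.comp ((hXm.const_mul _).neg)
  have hXe_nonneg : ∀ u : ℝ, 0 ≤ u → ∀ ω, 0 ≤ c * u ^ α * X ω := by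
    intro u hu ω
    exact mul_nonneg (mul_nonneg hc.le (Real.rpow_nonneg hu α)) (hX ω)
  have hXe_int : ∀ u : ℝ, 0 ≤ u → Integrable (fun ω => Real.exp (-(c * u ^ α * X ω))) P := by
    intro u hu
    refine (integrable_const (1:ℝ)).mono' (hXe_meas u).aestronglyMeasurable ?_
    filter_upwards with ω
    rw [Real.norm_eq_abs, abs_of_pos (Real.exp_pos _)]
    exact Real.exp_le_one_iff.mpr (by linarith [hXe_nonneg u hu ω])
  have hJpos : ∀ u : ℝ, 0 ≤ u → 0 < ∫ ω, Real.exp (-(c * u ^ α * X ω)) ∂P := by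
    intro u hu
    rw [integral_pos_iff_support_of_nonneg (fun ω => (Real.exp_pos _).le) (hXe_int u hu)]
    have : (Function.support fun ω => Real.exp (-(c * u ^ α * X ω))) = univ := by
      ext ω; simp [Function.support, Real.exp_ne_zero]
    rw [this]
    simp
  have hJle : ∀ u : ℝ, 0 ≤ u → ∫ ω, Real.exp (-(c * u ^ α * X ω)) ∂P ≤ 1 := by
    intro u hu
    calc ∫ ω, Real.exp (-(c * u ^ α * X ω)) ∂P ≤ ∫ _, (1:ℝ) ∂P := by
          apply integral_mono (hXe_int u hu) (integrable_const 1)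
          intro ω
          exact Real.exp_le_one_iff.mpr (by linarith [hXe_nonneg u hu ω])
      _ = 1 := by simp
  have hYe_int : ∀ u : ℝ, 0 ≤ u → Integrable (fun ω => Real.exp (-(u * Y ω))) P := by
    intro u hu
    by_contra h
    have h0 := integral_undef h
    rw [hLap u hu] at h0
    exact absurd h0.symm (ne_of_lt (hJpos u hu))
  -- Y is a.e. nonnegative
  have hYae : ∀ᵐ ω ∂P, 0 ≤ Y ω := by
    have hε : ∀ ε : ℝ, 0 < ε → P {ω | Y ω ≤ -ε} = 0 := by
      intro ε hεpos
      have hbound : ∀ n : ℕ, (P {ω | Y ω ≤ -ε}).toReal ≤ Real.exp (-(n * ε)) := by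
        intro n
        have hn : (0:ℝ) ≤ (n:ℝ) := n.cast_nonneg
        have hint := hYe_int n hn
        have hMarkov := mul_meas_ge_le_integral_of_nonneg
          (ae_of_all _ fun ω => (Real.exp_pos (-(n * Y ω))).le) hint (Real.exp ((n:ℝ) * ε))
        have hle1 : ∫ ω, Real.exp (-((n:ℝ) * Y ω)) ∂P ≤ 1 := by
          rw [hLap n hn]; exact hJle n hn
        have hsub : {ω | Y ω ≤ -ε} ⊆ {ω | Real.exp ((n:ℝ)*ε) ≤ Real.exp (-((n:ℝ) * Y ω))} := by
          intro ω hω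
          simp only [mem_setOf_eq] at *
          exact Real.exp_le_exp.mpr (by nlinarith)
        have hmono := measure_mono (μ := P) hsub
        have htR : (P {ω | Y ω ≤ -ε}).toReal
            ≤ (P {ω | Real.exp ((n:ℝ)*ε) ≤ Real.exp (-((n:ℝ) * Y ω))}).toReal :=
          ENNReal.toReal_mono (measure_ne_top _ _) hmono
        have hexp : 0 < Real.exp ((n:ℝ)*ε) := Real.exp_pos _
        have h3 : Real.exp ((n:ℝ)*ε)
            * (P {ω | Real.exp ((n:ℝ)*ε) ≤ Real.exp (-((n:ℝ) * Y ω))}).toReal ≤ 1 :=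
          le_trans hMarkov hle1
        have hb : (P {ω | Real.exp ((n:ℝ)*ε) ≤ Real.exp (-((n:ℝ) * Y ω))}).toReal
            ≤ 1 / Real.exp ((n:ℝ)*ε) := by
          rw [le_div_iff₀ hexp]
          linarith [h3]
        rw [Real.exp_neg, inv_eq_one_div]
        exact le_trans htR hb
      have hlim : Tendsto (fun n : ℕ => Real.exp (-((n:ℝ) * ε))) atTop (nhds 0) := by
        apply Real.tendsto_exp_atBot.comp
        exact tendsto_neg_atTop_atBot.comp
          ((tendsto_natCast_atTop_atTop).atTop_mul_const hεpos)
      have hle0 : (P {ω | Y ω ≤ -ε}).toReal ≤ 0 := ge_of_tendsto' hlim hbound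
      have h0 : (P {ω | Y ω ≤ -ε}).toReal = 0 := le_antisymm hle0 ENNReal.toReal_nonneg
      exact ((ENNReal.toReal_eq_zero_iff _).mp h0).resolve_right (measure_ne_top P _)
    have hsub : {ω | Y ω < 0} ⊆ ⋃ n : ℕ, {ω | Y ω ≤ -(1/((n:ℝ)+1))} := by
      intro ω hω
      simp only [mem_setOf_eq, mem_iUnion] at *
      obtain ⟨n, hn⟩ := exists_nat_gt (1 / (-Y ω))
      refine ⟨n, ?_⟩
      have hY : 0 < -Y ω := by linarith
      have hn1 : (0:ℝ) < (n:ℝ)+1 := by positivity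
      have h1 : 1 / (-Y ω) < (n:ℝ) + 1 := by linarith
      rw [div_lt_iff₀ hY] at h1
      have h2 : 1/((n:ℝ)+1) < -Y ω := by rw [div_lt_iff₀ hn1]; nlinarith
      linarith
    have hnull : P {ω | Y ω < 0} = 0 :=
      measure_mono_null hsub (measure_iUnion_null fun n => hε _ (by positivity))
    rw [ae_iff]
    convert hnull using 2
    ext ω
    simp [not_le]
  set G : ℝ := Real.Gamma (1 - β) / β with hG_def
  set K : ℝ := Real.Gamma (1 - β / α) / β with hK_def
  have hGpos : 0 < G := div_pos hΓβ hβ0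
  have hKpos : 0 < K := div_pos (Real.Gamma_pos_of_pos (by linarith)) hβ0
  have hrpow_meas : ∀ r : ℝ, Measurable (fun t : ℝ => t ^ r) := by
    intro r; measurability
  -- pointwise u-integral identities
  have hY_pt : ∀ᵐ ω ∂P,
      (∫⁻ u in Ioi (0:ℝ), ENNReal.ofReal ((1 - Real.exp (-(u * Y ω))) * u ^ (-β - 1)))
        = ENNReal.ofReal (Y ω ^ β * G) := by
    filter_upwards [hYae] with ω hω
    have hnn : 0 ≤ᵐ[volume.restrict (Ioi (0:ℝ))]
        (fun u => (1 - Real.exp (-(u * Y ω))) * u ^ (-β - 1)) := by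
      filter_upwards [ae_restrict_mem measurableSet_Ioi] with u hu
      have hu' : (0:ℝ) < u := hu
      exact mul_nonneg (one_sub_exp_neg_bounds (u * Y ω) (mul_nonneg hu'.le hω)).1
        (Real.rpow_nonneg hu'.le _)
    rw [← ofReal_integral_eq_lintegral_ofReal (lemB_int β (Y ω) hβ0 hβ1 hω) hnn,
      lemB_val β (Y ω) hβ0 hβ1 hω]
  have hX_pt : ∀ ω,
      (∫⁻ u in Ioi (0:ℝ), ENNReal.ofReal ((1 - Real.exp (-(c * u ^ α * X ω))) * u ^ (-β - 1)))
        = ENNReal.ofReal ((c * X ω) ^ (β / α) * K) := by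
    intro ω
    have hnn : 0 ≤ᵐ[volume.restrict (Ioi (0:ℝ))]
        (fun u => (1 - Real.exp (-(c * u ^ α * X ω))) * u ^ (-β - 1)) := by
      filter_upwards [ae_restrict_mem measurableSet_Ioi] with u hu
      have hu' : (0:ℝ) < u := hu
      exact mul_nonneg (one_sub_exp_neg_bounds _ (hXe_nonneg u hu'.le ω)).1
        (Real.rpow_nonneg hu'.le _)
    rw [← ofReal_integral_eq_lintegral_ofReal
        (lemC_int α β c (X ω) hα0 hα1 hβ0 hβα hc (hX ω)) hnn,
      lemC_val α β c (X ω) hα0 hα1 hβ0 hβα hc (hX ω)]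
  -- measurability on the product
  have hmY : Measurable (fun p : Ω × ℝ =>
      ENNReal.ofReal ((1 - Real.exp (-(p.2 * Y p.1))) * p.2 ^ (-β - 1))) := by
    apply Measurable.ennreal_ofReal
    exact (measurable_const.sub
        (Real.measurable_exp.comp (measurable_snd.mul (hYm.comp measurable_fst)).neg)).mul
      ((hrpow_meas (-β - 1)).comp measurable_snd)
  have hmX : Measurable (fun p : Ω × ℝ =>
      ENNReal.ofReal ((1 - Real.exp (-(c * p.2 ^ α * X p.1))) * p.2 ^ (-β - 1))) := by
    apply Measurable.ennreal_ofReal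
    exact (measurable_const.sub (Real.measurable_exp.comp
        ((((hrpow_meas α).comp measurable_snd).const_mul c).mul
          (hXm.comp measurable_fst)).neg)).mul
      ((hrpow_meas (-β - 1)).comp measurable_snd)
  -- middle identity in u
  have hmid : ∀ᵐ u ∂(volume.restrict (Ioi (0:ℝ))),
      (∫⁻ ω, ENNReal.ofReal ((1 - Real.exp (-(u * Y ω))) * u ^ (-β - 1)) ∂P)
        = ∫⁻ ω, ENNReal.ofReal ((1 - Real.exp (-(c * u ^ α * X ω))) * u ^ (-β - 1)) ∂P := by
    filter_upwards [ae_restrict_mem measurableSet_Ioi] with u hu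
    have hu' : (0:ℝ) < u := hu
    have hrnn : (0:ℝ) ≤ u ^ (-β - 1) := Real.rpow_nonneg hu'.le _
    have hYnn : 0 ≤ᵐ[P] (fun ω => 1 - Real.exp (-(u * Y ω))) := by
      filter_upwards [hYae] with ω hω
      exact (one_sub_exp_neg_bounds _ (mul_nonneg hu'.le hω)).1
    have hXnn : 0 ≤ᵐ[P] (fun ω => 1 - Real.exp (-(c * u ^ α * X ω))) :=
      ae_of_all _ fun ω => (one_sub_exp_neg_bounds _ (hXe_nonneg u hu'.le ω)).1
    have hYint : Integrable (fun ω => 1 - Real.exp (-(u * Y ω))) P :=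
      (integrable_const 1).sub (hYe_int u hu'.le)
    have hXint : Integrable (fun ω => 1 - Real.exp (-(c * u ^ α * X ω))) P :=
      (integrable_const 1).sub (hXe_int u hu'.le)
    calc ∫⁻ ω, ENNReal.ofReal ((1 - Real.exp (-(u * Y ω))) * u ^ (-β - 1)) ∂P
        = ∫⁻ ω, ENNReal.ofReal (1 - Real.exp (-(u * Y ω))) * ENNReal.ofReal (u ^ (-β - 1)) ∂P := by
          simp_rw [ENNReal.ofReal_mul' hrnn]
      _ = (∫⁻ ω, ENNReal.ofReal (1 - Real.exp (-(u * Y ω))) ∂P)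
            * ENNReal.ofReal (u ^ (-β - 1)) :=
          lintegral_mul_const' _ _ ENNReal.ofReal_ne_top
      _ = ENNReal.ofReal (∫ ω, (1 - Real.exp (-(u * Y ω))) ∂P)
            * ENNReal.ofReal (u ^ (-β - 1)) := by
          rw [ofReal_integral_eq_lintegral_ofReal hYint hYnn]
      _ = ENNReal.ofReal (∫ ω, (1 - Real.exp (-(c * u ^ α * X ω))) ∂P)
            * ENNReal.ofReal (u ^ (-β - 1)) := by
          rw [integral_sub (integrable_const 1) (hYe_int u hu'.le),
            integral_sub (integrable_const 1) (hXe_int u hu'.le), hLap u hu'.le]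
      _ = (∫⁻ ω, ENNReal.ofReal (1 - Real.exp (-(c * u ^ α * X ω))) ∂P)
            * ENNReal.ofReal (u ^ (-β - 1)) := by
          rw [ofReal_integral_eq_lintegral_ofReal hXint hXnn]
      _ = ∫⁻ ω, ENNReal.ofReal ((1 - Real.exp (-(c * u ^ α * X ω))) * u ^ (-β - 1)) ∂P := by
          rw [← lintegral_mul_const' _ _ ENNReal.ofReal_ne_top]
          simp_rw [ENNReal.ofReal_mul' hrnn]
  -- integrability of the X-side real integrand
  have hintCX : Integrable (fun ω => c ^ (β / α) * X ω ^ (β / α) * K) P :=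
    (hInt.const_mul _).mul_const _
  have hnnCX : 0 ≤ᵐ[P] (fun ω => c ^ (β / α) * X ω ^ (β / α) * K) :=
    ae_of_all _ fun ω => mul_nonneg
      (mul_nonneg (Real.rpow_nonneg hc.le _) (Real.rpow_nonneg (hX ω) _)) hKpos.le
  -- the key lintegral chain
  have keychain : ∫⁻ ω, ENNReal.ofReal (Y ω ^ β * G) ∂P
      = ENNReal.ofReal (∫ ω, c ^ (β / α) * X ω ^ (β / α) * K ∂P) := by
    calc ∫⁻ ω, ENNReal.ofReal (Y ω ^ β * G) ∂P
        = ∫⁻ ω, (∫⁻ u in Ioi (0:ℝ),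
            ENNReal.ofReal ((1 - Real.exp (-(u * Y ω))) * u ^ (-β - 1))) ∂P :=
          (lintegral_congr_ae hY_pt).symm
      _ = ∫⁻ u in Ioi (0:ℝ), ∫⁻ ω,
            ENNReal.ofReal ((1 - Real.exp (-(u * Y ω))) * u ^ (-β - 1)) ∂P :=
          lintegral_lintegral_swap hmY.aemeasurable
      _ = ∫⁻ u in Ioi (0:ℝ), ∫⁻ ω,
            ENNReal.ofReal ((1 - Real.exp (-(c * u ^ α * X ω))) * u ^ (-β - 1)) ∂P :=
          lintegral_congr_ae hmid
      _ = ∫⁻ ω, (∫⁻ u in Ioi (0:ℝ),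
            ENNReal.ofReal ((1 - Real.exp (-(c * u ^ α * X ω))) * u ^ (-β - 1))) ∂P :=
          (lintegral_lintegral_swap hmX.aemeasurable).symm
      _ = ∫⁻ ω, ENNReal.ofReal ((c * X ω) ^ (β / α) * K) ∂P := lintegral_congr hX_pt
      _ = ∫⁻ ω, ENNReal.ofReal (c ^ (β / α) * X ω ^ (β / α) * K) ∂P := by
          apply lintegral_congr
          intro ω
          rw [Real.mul_rpow hc.le (hX ω)]
      _ = ENNReal.ofReal (∫ ω, c ^ (β / α) * X ω ^ (β / α) * K ∂P) :=
          (ofReal_integral_eq_lintegral_ofReal hintCX hnnCX).symm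
  -- Y ^ β is integrable
  have hYb_meas : Measurable (fun ω => Y ω ^ β) := (hrpow_meas β).comp hYm
  have hYbG_nn : 0 ≤ᵐ[P] (fun ω => Y ω ^ β * G) := by
    filter_upwards [hYae] with ω hω
    exact mul_nonneg (Real.rpow_nonneg hω _) hGpos.le
  have hYbG_int : Integrable (fun ω => Y ω ^ β * G) P := by
    refine ⟨(hYb_meas.mul_const G).aestronglyMeasurable, ?_⟩
    rw [hasFiniteIntegral_iff_ofReal hYbG_nn, keychain]
    exact ENNReal.ofReal_lt_top
  have hofReal : ENNReal.ofReal (∫ ω, Y ω ^ β * G ∂P)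
      = ENNReal.ofReal (∫ ω, c ^ (β / α) * X ω ^ (β / α) * K ∂P) := by
    rw [ofReal_integral_eq_lintegral_ofReal hYbG_int hYbG_nn, keychain]
  have hreal : ∫ ω, Y ω ^ β * G ∂P = ∫ ω, c ^ (β / α) * X ω ^ (β / α) * K ∂P := by
    rw [ENNReal.ofReal_eq_ofReal_iff (integral_nonneg_of_ae hYbG_nn)
      (integral_nonneg_of_ae hnnCX)] at hofReal
    exact hofReal
  rw [integral_mul_const] at hreal
  have hrhs : ∫ ω, c ^ (β / α) * X ω ^ (β / α) * K ∂P
      = (c ^ (β / α) * ∫ ω, X ω ^ (β / α) ∂P) * K := by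
    rw [integral_mul_const, integral_const_mul]
  rw [hrhs] at hreal
  -- final algebra
  have hαq : (0:ℝ) < α ^ (β / α) := Real.rpow_pos_of_pos hα0 _
  have hcq : c ^ (β / α) = Real.Gamma (1 - α) ^ (β / α) / α ^ (β / α) :=
    Real.div_rpow hΓα.le hα0.le _
  refine mul_right_cancel₀ (ne_of_gt hGpos) ?_
  rw [hreal, hcq, hG_def, hK_def]
  field_simp
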